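/- For every positive integer n and every set partition r of {1,...,n}, the signed sum over all pairs (q,t) in the fiber f^{-1}(r) of the flattening map, of 2^{#q} · (−1)^{#q − #t} · (∏_i (#q_i)!) · (∏_j (#t_j − 1)!), equals 2^{#r} · ∏_i (#r_i − 1)! if all parts of r have odd cardinality, and equals 0 if some part of r has even cardinality. -/

import Mathlib

open Finset
variable {α : Type*} [DecidableEq α]

/-- weight of a set of blocks -/
def pw (P : Finset (Finset α)) : ℤ := (-2)^P.card * ∏ b ∈ P, (Nat.factorial b.card : ℤ)



lemma alt_sum_pow (n : ℕ) : ∑ k ∈ range n, ((-1:ℤ))^k = if Even n then 0 else 1 := by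
  induction n with
  | zero => simp
  | succ n ih =>
    rw [sum_range_succ, ih]
    rcases Nat.even_or_odd n with h | h
    · simp [h.neg_one_pow, Nat.even_add_one, Nat.not_even_iff_odd, h]
    · simp [h.neg_one_pow, Nat.even_add_one, Nat.not_even_iff_odd.mpr h]

lemma alt_sum_mul (n : ℕ) :
    2 * ∑ k ∈ range n, ((-1:ℤ))^k * k = if Even n then -(n:ℤ) else (n:ℤ) - 1 := by
  induction n with
  | zero => simp
  | succ n ih =>
    rw [sum_range_succ, mul_add, ih]
    rcases Nat.even_or_odd n with h | h
    · simp only [if_pos h, h.neg_one_pow, Nat.even_add_one, if_neg (not_not_intro h)]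
      push_cast; ring
    · have h' : ¬ Even n := Nat.not_even_iff_odd.mpr h
      simp only [if_neg h', h.neg_one_pow, Nat.even_add_one, if_pos h']
      push_cast; ring

/-- The finset of all parts-sets of finpartitions of `u`. -/
noncomputable def partitionFinsets (u : Finset α) : Finset (Finset (Finset α)) :=
  (Finset.univ : Finset (Finpartition u)).image Finpartition.parts

lemma mem_partitionFinsets {u : Finset α} {P : Finset (Finset α)} :
    P ∈ partitionFinsets u ↔ P.SupIndep id ∧ P.sup id = u ∧ ⊥ ∉ P := by
  constructor
  · rintro h
    obtain ⟨π, -, rfl⟩ := Finset.mem_image.mp h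
    exact ⟨π.supIndep, π.sup_parts, π.bot_notMem⟩
  · rintro ⟨h1, h2, h3⟩
    exact Finset.mem_image.mpr ⟨⟨P, h1, h2, h3⟩, Finset.mem_univ _, rfl⟩

lemma sum_finpartition_eq {u : Finset α} (F : Finset (Finset α) → ℤ) :
    ∑ π : Finpartition u, F π.parts = ∑ P ∈ partitionFinsets u, F P := by
  rw [partitionFinsets, Finset.sum_image]
  intro x _ y _ h
  exact Finpartition.ext h

lemma parts_mem_sdiff {u : Finset α} {P : Finset (Finset α)} (hP : P ∈ partitionFinsets u)
    {B : Finset α} (hB : B ∈ P) : P.erase B ∈ partitionFinsets (u \ B) := by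
  rw [mem_partitionFinsets] at hP ⊢
  obtain ⟨h1, h2, h3⟩ := hP
  refine ⟨h1.subset (erase_subset _ _), ?_, fun h => h3 (erase_subset _ _ h)⟩
  ext x
  simp only [Finset.mem_sup, mem_erase, id, Finset.mem_sdiff]
  constructor
  · rintro ⟨b, ⟨hbB, hb⟩, hxb⟩
    refine ⟨h2 ▸ Finset.mem_sup.mpr ⟨b, hb, hxb⟩, fun hxB => ?_⟩
    exact hbB (h1.pairwiseDisjoint.elim hb hB (fun hne =>
      (Finset.disjoint_left.mp hne hxb hxB).elim))
  · rintro ⟨hxu, hxB⟩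
    obtain ⟨b, hb, hxb⟩ := Finset.mem_sup.mp (h2 ▸ hxu : x ∈ P.sup id)
    exact ⟨b, ⟨fun h => hxB (h ▸ hxb), hb⟩, hxb⟩

lemma B_subset_nonempty {u : Finset α} {P : Finset (Finset α)} (hP : P ∈ partitionFinsets u)
    {B : Finset α} (hB : B ∈ P) : B ∈ u.powerset.filter (·.Nonempty) := by
  rw [mem_partitionFinsets] at hP
  rw [mem_filter, mem_powerset]
  refine ⟨hP.2.1 ▸ Finset.le_sup (f := id) hB, ?_⟩
  rw [Finset.nonempty_iff_ne_empty]
  rintro rfl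
  exact hP.2.2 hB

lemma insert_mem_partitionFinsets {u B : Finset α} (hB : B ∈ u.powerset.filter (·.Nonempty))
    {P : Finset (Finset α)} (hP : P ∈ partitionFinsets (u \ B)) :
    insert B P ∈ partitionFinsets u ∧ B ∉ P := by
  rw [mem_filter, mem_powerset] at hB
  rw [mem_partitionFinsets] at hP ⊢
  obtain ⟨h1, h2, h3⟩ := hP
  have hBP : B ∉ P := by
    intro h
    have := Finset.le_sup (f := id) h
    rw [h2] at this
    obtain ⟨x, hx⟩ := hB.2
    exact (Finset.mem_sdiff.mp (this hx)).2 hx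
  have hdisj : ∀ b ∈ P, Disjoint B b := by
    intro b hb
    have := Finset.le_sup (f := id) hb
    rw [h2] at this
    exact Finset.disjoint_left.mpr fun x hxB hxb => (Finset.mem_sdiff.mp (this hxb)).2 hxB
  refine ⟨⟨?_, ?_, ?_⟩, hBP⟩
  · rw [Finset.supIndep_iff_pairwiseDisjoint] at h1 ⊢
    rw [coe_insert]
    exact h1.insert (fun b hb _ => hdisj b hb)
  · rw [Finset.sup_insert, h2, id]
    ext x; simp only [Finset.mem_union, Finset.mem_sdiff, Finset.sup_eq_union]
    constructor
    · rintro (h | ⟨h, -⟩)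
      exacts [hB.1 h, h]
    · intro hx
      by_cases hxB : x ∈ B
      · exact Or.inl hxB
      · exact Or.inr ⟨hx, hxB⟩
  · intro h
    rcases Finset.mem_insert.mp h with h | h
    · obtain ⟨x, hx⟩ := hB.2
      rw [← h] at hx; exact absurd hx (Finset.notMem_empty x)
    · exact h3 h

/-- The key extraction bijection. -/
lemma extract (u : Finset α) (f : Finset α → Finset (Finset α) → ℤ) :
    ∑ P ∈ partitionFinsets u, ∑ B ∈ P, f B (P.erase B)
    = ∑ B ∈ u.powerset.filter (·.Nonempty), ∑ P ∈ partitionFinsets (u \ B), f B P := by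
  rw [Finset.sum_sigma' (partitionFinsets u) (fun P => P) (fun P B => f B (P.erase B)),
    Finset.sum_sigma' (u.powerset.filter (·.Nonempty)) (fun B => partitionFinsets (u \ B))
      (fun B P => f B P)]
  refine Finset.sum_nbij' (fun x => ⟨x.2, x.1.erase x.2⟩) (fun y => ⟨insert y.1 y.2, y.1⟩)
    ?_ ?_ ?_ ?_ ?_
  · rintro ⟨P, B⟩ hx
    rw [Finset.mem_sigma] at hx ⊢
    exact ⟨B_subset_nonempty hx.1 hx.2, parts_mem_sdiff hx.1 hx.2⟩
  · rintro ⟨B, P⟩ hy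
    rw [Finset.mem_sigma] at hy ⊢
    obtain ⟨h1, h2⟩ := insert_mem_partitionFinsets hy.1 hy.2
    exact ⟨h1, Finset.mem_insert_self _ _⟩
  · rintro ⟨P, B⟩ hx
    rw [Finset.mem_sigma] at hx
    exact Sigma.ext (Finset.insert_erase hx.2) HEq.rfl
  · rintro ⟨B, P⟩ hy
    rw [Finset.mem_sigma] at hy
    obtain ⟨h1, h2⟩ := insert_mem_partitionFinsets hy.1 hy.2
    exact Sigma.ext rfl (heq_of_eq (Finset.erase_insert h2))
  · rintro ⟨P, B⟩ _; rfl

lemma partitionFinsets_empty : partitionFinsets (∅ : Finset α) = {∅} := by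
  ext P
  rw [mem_partitionFinsets, Finset.mem_singleton]
  constructor
  · rintro ⟨h1, h2, h3⟩
    rw [Finset.eq_empty_iff_forall_notMem]
    intro b hb
    have hble := Finset.le_sup (f := id) hb
    rw [h2, Finset.le_iff_subset, Finset.subset_empty] at hble
    have hb2 : b = ⊥ := hble
    exact h3 (hb2 ▸ hb)
  · rintro rfl
    exact ⟨Finset.supIndep_empty _, rfl, Finset.notMem_empty _⟩

lemma nonempty_of_mem_pf {u : Finset α} (hu : u.Nonempty) {P : Finset (Finset α)}
    (hP : P ∈ partitionFinsets u) : P.Nonempty := by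
  rw [mem_partitionFinsets] at hP
  rw [Finset.nonempty_iff_ne_empty]
  rintro rfl
  rw [Finset.sup_empty] at hP
  rw [← hP.2.1] at hu
  simp at hu

lemma f_erase {u : Finset α} {P : Finset (Finset α)} (hP : P ∈ partitionFinsets u)
    {B : Finset α} (hB : B ∈ P) :
    (-2) * (Nat.factorial B.card : ℤ) *
      (pw (P.erase B) * (Nat.factorial (P.erase B).card : ℤ))
    = pw P * (Nat.factorial (P.card - 1) : ℤ) := by
  have hcard : (P.erase B).card = P.card - 1 := Finset.card_erase_of_mem hB
  have hpos : 0 < P.card := Finset.card_pos.mpr ⟨B, hB⟩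
  have hprod : (Nat.factorial B.card : ℤ) * ∏ b ∈ P.erase B, (Nat.factorial b.card : ℤ)
      = ∏ b ∈ P, (Nat.factorial b.card : ℤ) :=
    Finset.mul_prod_erase P (fun b => (Nat.factorial b.card : ℤ)) hB
  rw [pw, pw, hcard]
  have hpow : (-2 : ℤ) * (-2)^(P.card - 1) = (-2)^P.card := by
    rw [← pow_succ']
    congr 1
    omega
  calc (-2) * (Nat.factorial B.card : ℤ) *
        ((-2)^(P.card-1) * (∏ b ∈ P.erase B, (Nat.factorial b.card : ℤ)) *
          (Nat.factorial (P.card - 1) : ℤ))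
      = ((-2) * (-2)^(P.card-1)) *
          ((Nat.factorial B.card : ℤ) * ∏ b ∈ P.erase B, (Nat.factorial b.card : ℤ)) *
          (Nat.factorial (P.card - 1) : ℤ) := by ring
    _ = (-2)^P.card * (∏ b ∈ P, (Nat.factorial b.card : ℤ)) *
          (Nat.factorial (P.card - 1) : ℤ) := by rw [hpow, hprod]

noncomputable def Bs (u : Finset α) : ℤ :=
  ∑ P ∈ partitionFinsets u, pw P * (Nat.factorial P.card : ℤ)

noncomputable def As (u : Finset α) : ℤ :=
  ∑ P ∈ partitionFinsets u, pw P * (Nat.factorial (P.card - 1) : ℤ)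

lemma Bs_rec {u : Finset α} (hu : u.Nonempty) :
    Bs u = ∑ B ∈ u.powerset.filter (·.Nonempty), (-2) * (Nat.factorial B.card : ℤ) * Bs (u \ B) := by
  have h1 : Bs u = ∑ P ∈ partitionFinsets u,
      ∑ B ∈ P, (-2) * (Nat.factorial B.card : ℤ) *
        (pw (P.erase B) * (Nat.factorial (P.erase B).card : ℤ)) := by
    rw [Bs]
    refine Finset.sum_congr rfl fun P hP => ?_
    have hPne : P.Nonempty := nonempty_of_mem_pf hu hP
    have hpos : 0 < P.card := Finset.card_pos.mpr hPne
    calc pw P * (Nat.factorial P.card : ℤ)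
        = ∑ _B ∈ P, pw P * (Nat.factorial (P.card - 1) : ℤ) := by
          rw [Finset.sum_const, nsmul_eq_mul]
          rw [show Nat.factorial P.card = P.card * Nat.factorial (P.card - 1) by
            conv_lhs => rw [show P.card = (P.card - 1) + 1 by omega]
            rw [Nat.factorial_succ]
            congr 1
            omega]
          push_cast; ring
      _ = ∑ B ∈ P, (-2) * (Nat.factorial B.card : ℤ) *
            (pw (P.erase B) * (Nat.factorial (P.erase B).card : ℤ)) :=
          Finset.sum_congr rfl fun B hB => (f_erase hP hB).symm
  rw [h1, extract u (fun B Q => (-2) * (Nat.factorial B.card : ℤ) *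
      (pw Q * (Nat.factorial Q.card : ℤ)))]
  refine Finset.sum_congr rfl fun B _ => ?_
  rw [Bs, Finset.mul_sum]

lemma existsUnique_block {u : Finset α} {P : Finset (Finset α)} (hP : P ∈ partitionFinsets u)
    {x : α} (hx : x ∈ u) : ∃! B, B ∈ P ∧ x ∈ B := by
  rw [mem_partitionFinsets] at hP
  obtain ⟨h1, h2, h3⟩ := hP
  obtain ⟨B, hB, hxB⟩ := Finset.mem_sup.mp (h2 ▸ hx : x ∈ P.sup id)
  refine ⟨B, ⟨hB, hxB⟩, ?_⟩
  rintro C ⟨hC, hxC⟩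
  by_contra hne
  exact Finset.disjoint_left.mp
    (h1.pairwiseDisjoint hC hB hne) hxC hxB

lemma As_rec {u : Finset α} {x : α} (hx : x ∈ u) :
    As u = ∑ B ∈ u.powerset.filter (·.Nonempty),
      (if x ∈ B then (-2) * (Nat.factorial B.card : ℤ) * Bs (u \ B) else 0) := by
  have h1 : As u = ∑ P ∈ partitionFinsets u,
      ∑ B ∈ P, (if x ∈ B then (-2) * (Nat.factorial B.card : ℤ) *
        (pw (P.erase B) * (Nat.factorial (P.erase B).card : ℤ)) else 0) := by
    rw [As]
    refine Finset.sum_congr rfl fun P hP => ?_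
    obtain ⟨B₀, ⟨hB₀, hxB₀⟩, huniq⟩ := existsUnique_block hP hx
    rw [Finset.sum_eq_single_of_mem B₀ hB₀ ?side]
    · rw [if_pos hxB₀, f_erase hP hB₀]
    case side =>
      intro B hB hne
      rw [if_neg fun hxB => hne (huniq B ⟨hB, hxB⟩)]
  rw [h1, extract u (fun B Q => if x ∈ B then (-2) * (Nat.factorial B.card : ℤ) *
      (pw Q * (Nat.factorial Q.card : ℤ)) else 0)]
  refine Finset.sum_congr rfl fun B _ => ?_
  by_cases hxB : x ∈ B
  · simp only [if_pos hxB, Bs, Finset.mul_sum]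
  · simp only [if_neg hxB, Finset.sum_const_zero]

lemma sum_powerset_card_fun (u : Finset α) (g : ℕ → ℤ) :
    ∑ B ∈ u.powerset, g B.card = ∑ j ∈ range (u.card + 1), (u.card.choose j : ℤ) * g j := by
  rw [Finset.sum_powerset u (fun B => g B.card)]
  refine Finset.sum_congr rfl fun j _ => ?_
  have h : ∑ B ∈ powersetCard j u, g B.card = ∑ _B ∈ powersetCard j u, g j :=
    Finset.sum_congr rfl fun B hB => by rw [(Finset.mem_powersetCard.mp hB).2]
  rw [h, Finset.sum_const, Finset.card_powersetCard, nsmul_eq_mul]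

lemma Bs_empty : Bs (∅ : Finset α) = 1 := by
  rw [Bs, partitionFinsets_empty, Finset.sum_singleton]
  simp [pw]

lemma Bs_val (u : Finset α) :
    Bs u = if u = ∅ then 1 else 2 * (-1:ℤ)^u.card * (Nat.factorial u.card : ℤ) := by
  induction u using Finset.strongInduction with
  | _ u IH =>
  by_cases hu : u = ∅
  · rw [if_pos hu, hu, Bs_empty]
  · rw [if_neg hu]
    have hune : u.Nonempty := Finset.nonempty_iff_ne_empty.mpr hu
    set m := u.card with hm
    have hm1 : 1 ≤ m := Finset.card_pos.mpr hune
    set g : ℕ → ℤ := fun j => if j = 0 then 0 else (-2) * (Nat.factorial j : ℤ) *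
      (if j = m then 1 else 2 * (-1:ℤ)^(m-j) * (Nat.factorial (m-j) : ℤ)) with hg
    rw [Bs_rec hune]
    rw [Finset.sum_filter]
    have step : ∀ B ∈ u.powerset,
        (if B.Nonempty then (-2) * (Nat.factorial B.card : ℤ) * Bs (u \ B) else 0)
        = g B.card := by
      intro B hB
      rw [Finset.mem_powerset] at hB
      simp only [hg]
      by_cases hBne : B.Nonempty
      · have hcard0 : B.card ≠ 0 := Finset.card_ne_zero_of_mem hBne.choose_spec
        rw [if_pos hBne, if_neg hcard0]
        have hsub : u \ B ⊂ u := Finset.sdiff_ssubset hB hBne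
        rw [IH _ hsub]
        have hcards : (u \ B).card = m - B.card := Finset.card_sdiff_of_subset hB
        have hiff : u \ B = ∅ ↔ B.card = m := by
          rw [Finset.sdiff_eq_empty_iff_subset]
          constructor
          · intro h
            rw [Finset.Subset.antisymm hB h]
          · intro h
            rw [Finset.eq_of_subset_of_card_le hB h.ge]
        by_cases hB1 : B.card = m
        · rw [if_pos (hiff.mpr hB1), if_pos hB1]
        · rw [if_neg (fun h => hB1 (hiff.mp h)), if_neg hB1, hcards]
      · rw [if_neg hBne, Finset.not_nonempty_iff_eq_empty.mp hBne]
        simp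
    rw [Finset.sum_congr rfl step, sum_powerset_card_fun u g, ← hm]
    -- now pure numeric computation
    rw [Finset.sum_range_succ]
    have hjm : (m.choose m : ℤ) * g m = -2 * (Nat.factorial m : ℤ) := by
      simp only [hg]
      rw [Nat.choose_self, if_neg (show ¬ m = 0 by omega)]
      norm_num
    rw [hjm]
    have hrest : ∀ j ∈ range m, (m.choose j : ℤ) * g j
        = if j = 0 then 0 else (-4) * (Nat.factorial m : ℤ) * (-1:ℤ)^(m-j) := by
      intro j hj
      rw [Finset.mem_range] at hj
      simp only [hg]
      by_cases hj0 : j = 0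
      · rw [if_pos hj0, if_pos hj0, mul_zero]
      · rw [if_neg hj0, if_neg hj0, if_neg (by omega)]
        have hfac : (m.choose j : ℤ) * (Nat.factorial j : ℤ) * (Nat.factorial (m - j) : ℤ)
            = (Nat.factorial m : ℤ) := by
          rw [← Nat.cast_mul, ← Nat.cast_mul,
            Nat.choose_mul_factorial_mul_factorial (le_of_lt hj)]
        calc (m.choose j : ℤ) * ((-2) * (Nat.factorial j : ℤ) *
              (2 * (-1:ℤ)^(m-j) * (Nat.factorial (m-j) : ℤ)))
            = (-4) * ((m.choose j : ℤ) * (Nat.factorial j : ℤ) * (Nat.factorial (m - j) : ℤ))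
              * (-1:ℤ)^(m-j) := by ring
          _ = _ := by rw [hfac]
    rw [Finset.sum_congr rfl hrest]
    have hsplit : ∑ j ∈ range m, (if j = 0 then 0 else
          (-4) * (Nat.factorial m : ℤ) * (-1:ℤ)^(m-j))
        = (∑ j ∈ range m, (-4) * (Nat.factorial m : ℤ) * (-1:ℤ)^(m-j))
          - (-4) * (Nat.factorial m : ℤ) * (-1:ℤ)^m := by
      have h0 : ∑ j ∈ range m, (if j = 0 then (-4) * (Nat.factorial m : ℤ) * (-1:ℤ)^(m-j) else 0)
          = (-4) * (Nat.factorial m : ℤ) * (-1:ℤ)^m := by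
        rw [Finset.sum_ite_eq' (range m) 0
          (fun j => (-4) * (Nat.factorial m : ℤ) * (-1:ℤ)^(m-j)),
          if_pos (Finset.mem_range.mpr (by omega))]
        rw [Nat.sub_zero]
      rw [← h0, ← Finset.sum_sub_distrib]
      refine Finset.sum_congr rfl fun j _ => ?_
      by_cases hj0 : j = 0 <;> simp [hj0]
    rw [hsplit]
    have hS : ∑ j ∈ range m, (-1:ℤ)^(m-j) = -(if Even m then 0 else 1) := by
      rw [← Finset.sum_range_reflect (fun j => (-1:ℤ)^(m-j)) m]
      have h1 : ∑ j ∈ range m, (-1:ℤ)^(m-(m-1-j)) = ∑ j ∈ range m, (-1:ℤ)^(j+1) :=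
        Finset.sum_congr rfl fun j hj => by
          rw [Finset.mem_range] at hj
          rw [show m - (m - 1 - j) = j + 1 by omega]
      rw [h1]
      have h2 : ∑ j ∈ range m, (-1:ℤ)^(j+1) = -∑ j ∈ range m, (-1:ℤ)^j := by
        rw [← Finset.sum_neg_distrib]
        refine Finset.sum_congr rfl fun j _ => by rw [pow_succ]; ring
      rw [h2, alt_sum_pow]
    have hSmul : ∑ j ∈ range m, (-4) * (Nat.factorial m : ℤ) * (-1:ℤ)^(m-j)
        = (-4) * (Nat.factorial m : ℤ) * (-(if Even m then 0 else 1)) := by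
      rw [← Finset.mul_sum, hS]
    rw [hSmul]
    rcases Nat.even_or_odd m with he | ho
    · rw [if_pos he, he.neg_one_pow]
      ring
    · rw [if_neg (Nat.not_even_iff_odd.mpr ho), ho.neg_one_pow]
      ring

lemma As_val {u : Finset α} (hu : u.Nonempty) :
    As u = if Odd u.card then -2 * (Nat.factorial (u.card - 1) : ℤ) else 0 := by
  obtain ⟨x, hx⟩ := hu
  set m := u.card with hm
  have hm1 : 1 ≤ m := Finset.card_pos.mpr ⟨x, hx⟩
  set n := m - 1 with hn
  have hmn : m = n + 1 := by omega
  set g : ℕ → ℤ := fun i => (-2) * (Nat.factorial (i+1) : ℤ) *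
    (if i + 1 = m then 1 else 2 * (-1:ℤ)^(m-1-i) * (Nat.factorial (m-1-i) : ℤ)) with hg
  have step1 : As u = ∑ B ∈ u.powerset,
      (if x ∈ B then (-2) * (Nat.factorial B.card : ℤ) * Bs (u \ B) else 0) := by
    rw [As_rec hx, Finset.sum_filter]
    refine Finset.sum_congr rfl fun B _ => ?_
    by_cases hxB : x ∈ B
    · rw [if_pos ⟨x, hxB⟩]
    · rw [if_neg hxB]
      exact ite_self 0
  have hxu : x ∉ u.erase x := Finset.notMem_erase x u
  have hins : u.powerset = (insert x (u.erase x)).powerset := by rw [Finset.insert_erase hx]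
  rw [step1, hins, Finset.sum_powerset_insert hxu]
  have hzero : ∑ B ∈ (u.erase x).powerset,
      (if x ∈ B then (-2) * (Nat.factorial B.card : ℤ) * Bs (u \ B) else 0) = 0 := by
    refine Finset.sum_eq_zero fun B hB => ?_
    rw [Finset.mem_powerset] at hB
    rw [if_neg (fun hxB => hxu (hB hxB))]
  rw [hzero, zero_add]
  have step2 : ∀ C ∈ (u.erase x).powerset,
      (if x ∈ insert x C then (-2) * (Nat.factorial (insert x C).card : ℤ) *
        Bs (u \ insert x C) else 0) = g C.card := by
    intro C hC
    rw [Finset.mem_powerset] at hC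
    have hxC : x ∉ C := fun h => hxu (hC h)
    have hCu : insert x C ⊆ u := Finset.insert_subset hx (hC.trans (Finset.erase_subset _ _))
    rw [if_pos (Finset.mem_insert_self _ _), Finset.card_insert_of_notMem hxC]
    rw [Bs_val (u \ insert x C)]
    have hcards : (u \ insert x C).card = m - 1 - C.card := by
      rw [Finset.card_sdiff_of_subset hCu, Finset.card_insert_of_notMem hxC]
      omega
    have hiff : u \ insert x C = ∅ ↔ C.card + 1 = m := by
      rw [Finset.sdiff_eq_empty_iff_subset]
      constructor
      · intro h
        have he : insert x C = u := Finset.Subset.antisymm hCu h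
        rw [hm, ← he, Finset.card_insert_of_notMem hxC]
      · intro h
        have : (insert x C).card = m := by rw [Finset.card_insert_of_notMem hxC]; exact h
        rw [Finset.eq_of_subset_of_card_le hCu this.ge]
    simp only [hg]
    by_cases h1 : C.card + 1 = m
    · rw [if_pos (hiff.mpr h1), if_pos h1]
    · rw [if_neg (fun h => h1 (hiff.mp h)), if_neg h1, hcards]
  rw [Finset.sum_congr rfl step2, sum_powerset_card_fun (u.erase x) g,
    Finset.card_erase_of_mem hx, ← hm]
  -- numeric part
  have hrange : m - 1 + 1 = n + 1 := by omega
  rw [hrange, Finset.sum_range_succ]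
  have hjn : ((n.choose n : ℕ) : ℤ) * g n = -2 * (Nat.factorial m : ℤ) := by
    simp only [hg]
    rw [Nat.choose_self, if_pos (by omega)]
    rw [show n + 1 = m by omega]
    push_cast; ring
  rw [hjn]
  have hrest : ∀ i ∈ range n, ((n.choose i : ℕ) : ℤ) * g i
      = (-4) * (Nat.factorial n : ℤ) * ((i:ℤ)+1) * (-1:ℤ)^(n-i) := by
    intro i hi
    rw [Finset.mem_range] at hi
    simp only [hg]
    rw [if_neg (by omega)]
    have e1 : m - 1 - i = n - i := by omega
    have hfac : ((n.choose i : ℕ) : ℤ) * (Nat.factorial i : ℤ) * (Nat.factorial (n - i) : ℤ)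
        = (Nat.factorial n : ℤ) := by
      rw [← Nat.cast_mul, ← Nat.cast_mul,
        Nat.choose_mul_factorial_mul_factorial (le_of_lt hi)]
    have e2 : (Nat.factorial (i+1) : ℤ) = ((i:ℤ)+1) * (Nat.factorial i : ℤ) := by
      rw [Nat.factorial_succ]; push_cast; ring
    rw [e1, e2]
    calc ((n.choose i : ℕ) : ℤ) * ((-2) * (((i:ℤ)+1) * (Nat.factorial i : ℤ)) *
          (2 * (-1:ℤ)^(n-i) * (Nat.factorial (n-i) : ℤ)))
        = (-4) * (((n.choose i : ℕ) : ℤ) * (Nat.factorial i : ℤ) * (Nat.factorial (n-i) : ℤ))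
          * ((i:ℤ)+1) * (-1:ℤ)^(n-i) := by ring
      _ = _ := by rw [hfac]
  rw [Finset.sum_congr rfl hrest]
  -- T := ∑ i ∈ range n, (i+1) * (-1)^(n-i)
  have hT2 : 2 * ∑ i ∈ range n, ((i:ℤ)+1) * (-1:ℤ)^(n-i)
      = -(2*(n:ℤ)*(if Even n then 0 else 1) - (if Even n then -(n:ℤ) else (n:ℤ)-1)) := by
    rw [← Finset.sum_range_reflect (fun i => ((i:ℤ)+1) * (-1:ℤ)^(n-i)) n]
    have h1 : ∑ i ∈ range n, (((n-1-i : ℕ):ℤ)+1) * (-1:ℤ)^(n-(n-1-i))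
        = ∑ i ∈ range n, (-(1:ℤ)) * (((n:ℤ) - i) * (-1:ℤ)^i) := by
      refine Finset.sum_congr rfl fun i hi => ?_
      rw [Finset.mem_range] at hi
      rw [show n - (n-1-i) = i + 1 by omega]
      have : ((n-1-i : ℕ):ℤ) = (n:ℤ) - 1 - i := by
        have : (1:ℤ) + i ≤ n := by exact_mod_cast (by omega : 1 + i ≤ n)
        push_cast [Nat.cast_sub (by omega : i ≤ n - 1), Nat.cast_sub (by omega : 1 ≤ n)]
        ring
      rw [this, pow_succ]
      ring
    rw [h1]
    rw [← Finset.mul_sum]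
    have h3 : ∑ i ∈ range n, ((n:ℤ) - i) * (-1:ℤ)^i
        = (n:ℤ) * (∑ i ∈ range n, (-1:ℤ)^i) - ∑ i ∈ range n, (-1:ℤ)^i * i := by
      rw [Finset.mul_sum, ← Finset.sum_sub_distrib]
      exact Finset.sum_congr rfl fun i _ => by ring
    rw [mul_comm (-(1:ℤ)), mul_assoc, h3, alt_sum_pow n]
    linear_combination alt_sum_mul n
  refine mul_left_cancel₀ (two_ne_zero (α := ℤ)) ?_
  rw [mul_add]
  have e4 : (2:ℤ) * ∑ i ∈ range n, (-4) * (Nat.factorial n : ℤ) * ((i:ℤ)+1) * (-1:ℤ)^(n-i)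
      = (-4) * (Nat.factorial n : ℤ) *
        (2 * ∑ i ∈ range n, ((i:ℤ)+1) * (-1:ℤ)^(n-i)) := by
    rw [Finset.mul_sum, Finset.mul_sum, Finset.mul_sum]
    exact Finset.sum_congr rfl fun i _ => by ring
  rw [e4, hT2]
  have hodd : Odd m ↔ Even n := by rw [hmn, Nat.odd_add_one, Nat.not_odd_iff_even]
  rcases Nat.even_or_odd n with he | ho
  · rw [if_pos (hodd.mpr he)]
    simp only [if_pos he]
    rw [hmn, Nat.factorial_succ]
    push_cast; ring
  · have h' := Nat.not_even_iff_odd.mpr ho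
    rw [if_neg (fun h => h' (hodd.mp h))]
    simp only [if_neg h']
    rw [hmn, Nat.factorial_succ]
    push_cast; ring

lemma neg_one_pow_sub {a b : ℕ} (h : b ≤ a) : (-1:ℤ)^(a-b) = (-1)^a * (-1)^b := by
  have h2 : ((-1:ℤ)^(2*b)) = 1 := by rw [pow_mul]; norm_num
  calc (-1:ℤ)^(a-b) = (-1)^(a-b) * (-1)^(2*b) := by rw [h2, mul_one]
    _ = (-1)^(a-b+2*b) := (pow_add _ _ _).symm
    _ = (-1)^(a+b) := by congr 1; omega
    _ = (-1)^a * (-1)^b := pow_add _ _ _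

section Main

variable {n : ℕ} (r : Finpartition (Finset.univ : Finset (Fin n)))

/-- refinement condition -/
def Cond (q : Finpartition (Finset.univ : Finset (Fin n))) : Prop :=
  ∀ b ∈ q.parts, ∃ p ∈ r.parts, b ⊆ p

instance (q : Finpartition (Finset.univ : Finset (Fin n))) : Decidable (Cond r q) := by
  unfold Cond; infer_instance

variable {r}

lemma sup_filter {q : Finpartition (Finset.univ : Finset (Fin n))} (hq : Cond r q)
    {p : Finset (Fin n)} (hp : p ∈ r.parts) :
    ((q.parts.filter (· ⊆ p)).sup id : Finset (Fin n)) = p := by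
  ext x
  rw [Finset.mem_sup]
  constructor
  · rintro ⟨b, hb, hxb⟩
    rw [Finset.mem_filter] at hb
    exact hb.2 hxb
  · intro hxp
    have hxu : x ∈ q.parts.sup id := by
      rw [q.sup_parts]; exact Finset.mem_univ x
    obtain ⟨b, hb, hxb⟩ := Finset.mem_sup.mp hxu
    obtain ⟨p', hp', hbp'⟩ := hq b hb
    have hpp' : p = p' := by
      by_contra hne
      exact Finset.disjoint_left.mp (r.disjoint hp hp' hne) hxp (hbp' hxb)
    exact ⟨b, Finset.mem_filter.mpr ⟨hb, hpp' ▸ hbp'⟩, hxb⟩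

lemma filter_nonempty {q : Finpartition (Finset.univ : Finset (Fin n))} (hq : Cond r q)
    {p : Finset (Fin n)} (hp : p ∈ r.parts) : (q.parts.filter (· ⊆ p)).Nonempty := by
  rw [Finset.nonempty_iff_ne_empty]
  intro h
  have hpne : p.Nonempty := r.nonempty_of_mem_parts hp
  have := sup_filter hq hp
  rw [h, Finset.sup_empty] at this
  rw [← this] at hpne
  simp at hpne

lemma filter_disj {q : Finpartition (Finset.univ : Finset (Fin n))}
    {p p' : Finset (Fin n)} (hp : p ∈ r.parts) (hp' : p' ∈ r.parts) (hne : p ≠ p') :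
    Disjoint (q.parts.filter (· ⊆ p)) (q.parts.filter (· ⊆ p')) := by
  rw [Finset.disjoint_left]
  rintro b hb hb'
  rw [Finset.mem_filter] at hb hb'
  obtain ⟨x, hx⟩ := q.nonempty_of_mem_parts hb.1
  exact Finset.disjoint_left.mp (r.disjoint hp hp' hne) (hb.2 hx) (hb'.2 hx)

lemma filter_injOn {q : Finpartition (Finset.univ : Finset (Fin n))} (hq : Cond r q) :
    Set.InjOn (fun p => q.parts.filter (· ⊆ p)) r.parts := by
  intro p hp p' hp' h
  have h1 := sup_filter hq hp
  have h2 := sup_filter hq hp'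
  dsimp at h
  rw [← h1, ← h2, h]

/-- q.parts is the disjoint union of the filters over r.parts -/
lemma parts_eq_biUnion {q : Finpartition (Finset.univ : Finset (Fin n))} (hq : Cond r q) :
    q.parts = r.parts.biUnion (fun p => q.parts.filter (· ⊆ p)) := by
  ext b
  rw [Finset.mem_biUnion]
  constructor
  · intro hb
    obtain ⟨p, hp, hbp⟩ := hq b hb
    exact ⟨p, hp, Finset.mem_filter.mpr ⟨hb, hbp⟩⟩
  · rintro ⟨p, hp, hb⟩
    exact (Finset.mem_filter.mp hb).1

lemma card_parts_eq_sum {q : Finpartition (Finset.univ : Finset (Fin n))} (hq : Cond r q) :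
    q.parts.card = ∑ p ∈ r.parts, (q.parts.filter (· ⊆ p)).card := by
  conv_lhs => rw [parts_eq_biUnion hq]
  exact Finset.card_biUnion (fun p hp p' hp' hne => filter_disj hp hp' hne)

lemma card_le_card_parts {q : Finpartition (Finset.univ : Finset (Fin n))} (hq : Cond r q) :
    r.parts.card ≤ q.parts.card := by
  rw [card_parts_eq_sum hq]
  calc r.parts.card = ∑ _p ∈ r.parts, 1 := by rw [Finset.sum_const, smul_eq_mul, mul_one]
    _ ≤ _ := Finset.sum_le_sum fun p hp => Finset.card_pos.mpr (filter_nonempty hq hp)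

/-- the canonical t for a refining q -/
def canonT {q : Finpartition (Finset.univ : Finset (Fin n))} (hq : Cond r q) :
    Finpartition q.parts where
  parts := r.parts.image (fun p => q.parts.filter (· ⊆ p))
  supIndep := by
    rw [Finset.supIndep_iff_pairwiseDisjoint]
    rintro P hP P' hP' hne
    rw [Finset.coe_image, Set.mem_image] at hP hP'
    obtain ⟨p, hp, rfl⟩ := hP
    obtain ⟨p', hp', rfl⟩ := hP'
    exact filter_disj hp hp' (fun h => hne (by rw [h]))
  sup_parts := by
    ext b
    rw [Finset.sup_image]
    rw [Finset.mem_sup]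
    constructor
    · rintro ⟨p, hp, hb⟩
      exact (Finset.mem_filter.mp hb).1
    · intro hb
      obtain ⟨p, hp, hbp⟩ := hq b hb
      exact ⟨p, hp, Finset.mem_filter.mpr ⟨hb, hbp⟩⟩
  bot_notMem := by
    rw [Finset.mem_image]
    rintro ⟨p, hp, h⟩
    have := filter_nonempty hq hp
    rw [h] at this
    simp at this

lemma canonT_parts {q : Finpartition (Finset.univ : Finset (Fin n))} (hq : Cond r q) :
    (canonT hq).parts = r.parts.image (fun p => q.parts.filter (· ⊆ p)) := rfl

lemma canonT_card {q : Finpartition (Finset.univ : Finset (Fin n))} (hq : Cond r q) :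
    (canonT hq).parts.card = r.parts.card := by
  rw [canonT_parts, Finset.card_image_of_injOn (filter_injOn hq)]

lemma canonT_cond {q : Finpartition (Finset.univ : Finset (Fin n))} (hq : Cond r q) :
    (canonT hq).parts.image (fun s => s.sup id) = r.parts := by
  rw [canonT_parts, Finset.image_image]
  have h : Set.EqOn ((fun s => s.sup id) ∘ fun p => q.parts.filter (· ⊆ p)) id r.parts :=
    fun p hp => sup_filter hq hp
  rw [Finset.image_congr h, Finset.image_id]

end Main

section Main2

variable {n : ℕ} {r : Finpartition (Finset.univ : Finset (Fin n))}
variable {q : Finpartition (Finset.univ : Finset (Fin n))}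

/-- any t in the fiber over r equals canonT -/
lemma t_unique (hq : Cond r q) (t : Finpartition q.parts)
    (ht : t.parts.image (fun s => s.sup id) = r.parts) : t = canonT hq := by
  have hsub : t.parts ⊆ (canonT hq).parts := by
    intro c hc
    have hsupc : c.sup id ∈ r.parts := by
      rw [← ht]; exact Finset.mem_image_of_mem _ hc
    have hkey : c = q.parts.filter (· ⊆ c.sup id) := by
      ext b
      rw [Finset.mem_filter]
      constructor
      · intro hb
        have hbq : b ∈ q.parts := (t.le hc) hb
        exact ⟨hbq, Finset.le_sup (f := id) hb⟩
      · rintro ⟨hbq, hbsup⟩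
        -- b belongs to some c' of t
        have : b ∈ t.parts.sup id := by rw [t.sup_parts]; exact hbq
        obtain ⟨c', hc', hbc'⟩ := Finset.mem_sup.mp this
        have hsupc' : c'.sup id ∈ r.parts := by
          rw [← ht]; exact Finset.mem_image_of_mem _ hc'
        have hbsup' : b ⊆ c'.sup id := Finset.le_sup (f := id) hbc'
        obtain ⟨x, hx⟩ := q.nonempty_of_mem_parts hbq
        have heq : c.sup id = c'.sup id := by
          by_contra hne
          exact Finset.disjoint_left.mp (r.disjoint hsupc hsupc' hne)
            (hbsup hx) (hbsup' hx)
        have hcc' : c = c' := by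
          by_contra hne
          -- sups are disjoint for distinct t-parts, but both contain x
          have hdisj := t.disjoint hc hc' hne
          obtain ⟨y, hy⟩ := q.nonempty_of_mem_parts hbq
          -- x ∈ c.sup id via heq and hbsup'
          have hx1 : x ∈ c.sup id := heq ▸ (hbsup' hx)
          obtain ⟨b1, hb1, hxb1⟩ := Finset.mem_sup.mp hx1
          have hxb : x ∈ b := hx
          have hb1q : b ∈ q.parts := hbq
          have hb1q' : b1 ∈ q.parts := (t.le hc) hb1
          have : b1 = b := q.eq_of_mem_parts hb1q' hbq hxb1 hxb
          rw [this] at hb1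
          exact Finset.disjoint_left.mp hdisj hb1 hbc'
        rw [hcc']
        exact hbc'
    rw [canonT_parts, Finset.mem_image]
    exact ⟨c.sup id, hsupc, hkey.symm⟩
  have hcard : (canonT hq).parts.card ≤ t.parts.card := by
    rw [canonT_card]
    calc r.parts.card = (t.parts.image (fun s => s.sup id)).card := by rw [ht]
      _ ≤ t.parts.card := Finset.card_image_le
  exact Finpartition.ext (Finset.eq_of_subset_of_card_le hsub hcard)

lemma cond_of_fiber (t : Finpartition q.parts)
    (ht : t.parts.image (fun s => s.sup id) = r.parts) : Cond r q := by
  intro b hb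
  have : b ∈ t.parts.sup id := by rw [t.sup_parts]; exact hb
  obtain ⟨c, hc, hbc⟩ := Finset.mem_sup.mp this
  refine ⟨c.sup id, ?_, Finset.le_sup (f := id) hbc⟩
  rw [← ht]; exact Finset.mem_image_of_mem _ hc

/-- Step A : evaluation of the inner sum over t -/
lemma innerT_sum (q : Finpartition (Finset.univ : Finset (Fin n))) :
    ∑ t : Finpartition q.parts,
      (if t.parts.image (fun s => s.sup id) = r.parts then
        (2 : ℤ) ^ q.parts.card * (-1 : ℤ) ^ (q.parts.card - t.parts.card) *
          (∏ b ∈ q.parts, (Nat.factorial b.card : ℤ)) *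
          (∏ c ∈ t.parts, (Nat.factorial (c.card - 1) : ℤ))
      else 0)
    = if hq : Cond r q then
        (2 : ℤ) ^ q.parts.card * (-1 : ℤ) ^ (q.parts.card - r.parts.card) *
          (∏ b ∈ q.parts, (Nat.factorial b.card : ℤ)) *
          (∏ p ∈ r.parts, (Nat.factorial ((q.parts.filter (· ⊆ p)).card - 1) : ℤ))
      else 0 := by
  split_ifs with hq
  · rw [Fintype.sum_eq_single (canonT hq)]
    · rw [if_pos (canonT_cond hq), canonT_card hq]
      congr 1
      rw [canonT_parts, Finset.prod_image (fun p hp p' hp' h => filter_injOn hq hp hp' h)]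
    · intro t htne
      rw [if_neg (fun h => htne (t_unique hq t h))]
  · refine Finset.sum_eq_zero fun t _ => ?_
    rw [if_neg (fun h => hq (cond_of_fiber t h))]

end Main2

section Main3

variable {n : ℕ} {r : Finpartition (Finset.univ : Finset (Fin n))}

/-- Step B : factorization over the parts of r -/
lemma sum_refine (w : Finset (Fin n) → Finset (Finset (Fin n)) → ℤ) :
    ∑ q : Finpartition (Finset.univ : Finset (Fin n)),
      (if Cond r q then ∏ p ∈ r.parts.attach, w p.1 (q.parts.filter (· ⊆ p.1)) else 0)
    = ∏ p ∈ r.parts, ∑ π : Finpartition p, w p π.parts := by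
  rw [Finset.prod_sum r.parts (fun p => (Finset.univ : Finset (Finpartition p)))
    (fun p π => w p π.parts)]
  rw [← Finset.sum_filter]
  refine Finset.sum_bij'
    (i := fun q hq => fun p hp =>
      q.ofSubset (Finset.filter_subset (· ⊆ p) q.parts)
        (sup_filter ((Finset.mem_filter.mp hq).2) hp))
    (j := fun g _ => r.bind (fun p hp => g p hp))
    ?_ ?_ ?_ ?_ ?_
  · intro q hq
    rw [Finset.mem_pi]
    intro p hp
    exact Finset.mem_univ _
  · intro g hg
    rw [Finset.mem_filter]
    refine ⟨Finset.mem_univ _, ?_⟩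
    intro b hb
    rw [Finpartition.mem_bind] at hb
    obtain ⟨p, hp, hbg⟩ := hb
    exact ⟨p, hp, (g p hp).le hbg⟩
  · intro q hq
    refine Finpartition.ext ?_
    ext b
    rw [Finpartition.mem_bind]
    constructor
    · rintro ⟨p, hp, hb⟩
      exact (Finset.mem_filter.mp hb).1
    · intro hb
      obtain ⟨p, hp, hbp⟩ := (Finset.mem_filter.mp hq).2 b hb
      exact ⟨p, hp, Finset.mem_filter.mpr ⟨hb, hbp⟩⟩
  · intro g hg
    funext p hp
    refine Finpartition.ext ?_
    show (r.bind (fun p hp => g p hp)).parts.filter (· ⊆ p) = (g p hp).parts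
    ext b
    rw [Finset.mem_filter, Finpartition.mem_bind]
    constructor
    · rintro ⟨⟨p', hp', hbg⟩, hbp⟩
      have hbp' : b ⊆ p' := (g p' hp').le hbg
      obtain ⟨x, hx⟩ := (g p' hp').nonempty_of_mem_parts hbg
      have : p = p' := by
        by_contra hne
        exact Finset.disjoint_left.mp (r.disjoint hp hp' hne) (hbp hx) (hbp' hx)
      subst this
      exact hbg
    · intro hb
      exact ⟨⟨p, hp, hb⟩, (g p hp).le hb⟩
  · intro q hq
    rfl

end Main3

theorem signed_sum_over_flattening_fiber (n : ℕ) (hn : 0 < n)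
    (r : Finpartition (Finset.univ : Finset (Fin n))) :
    ∑ q : Finpartition (Finset.univ : Finset (Fin n)),
      ∑ t : Finpartition q.parts,
        (if t.parts.image (fun s => s.sup id) = r.parts then
          (2 : ℤ) ^ q.parts.card * (-1 : ℤ) ^ (q.parts.card - t.parts.card) *
            (∏ b ∈ q.parts, (Nat.factorial b.card : ℤ)) *
            (∏ c ∈ t.parts, (Nat.factorial (c.card - 1) : ℤ))
        else 0)
    = if ∀ p ∈ r.parts, Odd p.card then
        (2 : ℤ) ^ r.parts.card * ∏ p ∈ r.parts, (Nat.factorial (p.card - 1) : ℤ)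
      else 0 := by
  set w : Finset (Fin n) → Finset (Finset (Fin n)) → ℤ :=
    fun _ P => pw P * (Nat.factorial (P.card - 1) : ℤ) with hw
  rw [Finset.sum_congr rfl (fun q _ => innerT_sum (r := r) q)]
  have h2 : ∀ q : Finpartition (Finset.univ : Finset (Fin n)),
      (if hq : Cond r q then
        (2 : ℤ) ^ q.parts.card * (-1 : ℤ) ^ (q.parts.card - r.parts.card) *
          (∏ b ∈ q.parts, (Nat.factorial b.card : ℤ)) *
          (∏ p ∈ r.parts, (Nat.factorial ((q.parts.filter (· ⊆ p)).card - 1) : ℤ))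
      else 0)
      = (-1:ℤ)^r.parts.card *
        (if Cond r q then ∏ p ∈ r.parts.attach, w p.1 (q.parts.filter (· ⊆ p.1)) else 0) := by
    intro q
    split_ifs with hq
    · rw [Finset.prod_attach r.parts
        (fun p => w p (q.parts.filter (· ⊆ p)))]
      simp only [hw, pw]
      rw [Finset.prod_mul_distrib, Finset.prod_mul_distrib]
      have hb : ∏ p ∈ r.parts, ((-2:ℤ))^((q.parts.filter (· ⊆ p)).card)
          = (-2:ℤ)^q.parts.card := by
        rw [Finset.prod_pow_eq_pow_sum, ← card_parts_eq_sum hq]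
      have hc : ∏ p ∈ r.parts, ∏ b ∈ q.parts.filter (· ⊆ p), (Nat.factorial b.card : ℤ)
          = ∏ b ∈ q.parts, (Nat.factorial b.card : ℤ) := by
        conv_rhs => rw [parts_eq_biUnion hq]
        rw [Finset.prod_biUnion (fun p hp p' hp' hne => filter_disj hp hp' hne)]
      rw [hb, hc, neg_one_pow_sub (card_le_card_parts hq)]
      rw [show ((-2):ℤ)^q.parts.card = (-1)^q.parts.card * 2^q.parts.card by
        rw [← mul_pow]; norm_num]
      ring
    · rw [mul_zero]
  rw [Finset.sum_congr rfl (fun q _ => h2 q), ← Finset.mul_sum, sum_refine w]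
  have hAs : ∀ p ∈ r.parts, (∑ π : Finpartition p, w p π.parts) = As p := by
    intro p _
    exact sum_finpartition_eq (fun P => pw P * (Nat.factorial (P.card - 1) : ℤ))
  rw [Finset.prod_congr rfl hAs]
  by_cases hodd : ∀ p ∈ r.parts, Odd p.card
  · rw [if_pos hodd]
    rw [Finset.prod_congr rfl (fun p hp => by
      rw [As_val (r.nonempty_of_mem_parts hp), if_pos (hodd p hp)])]
    rw [Finset.prod_mul_distrib, Finset.prod_const]
    rw [show ((-2):ℤ)^r.parts.card = (-1)^r.parts.card * 2^r.parts.card by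
      rw [← mul_pow]; norm_num]
    rw [show ((-1:ℤ))^r.parts.card * ((-1)^r.parts.card * 2^r.parts.card *
        ∏ p ∈ r.parts, (Nat.factorial (p.card - 1) : ℤ))
      = ((-1:ℤ)*(-1))^r.parts.card * 2^r.parts.card *
        ∏ p ∈ r.parts, (Nat.factorial (p.card - 1) : ℤ) by rw [mul_pow]; ring]
    norm_num
  · rw [if_neg hodd]
    push_neg at hodd
    obtain ⟨p₀, hp₀, hev⟩ := hodd
    rw [Finset.prod_eq_zero hp₀ (by
      rw [As_val (r.nonempty_of_mem_parts hp₀), if_neg hev]), mul_zero]
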